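/- If some variable is not bound, the polymatroid bound is infinite: Let DC be a set of degree constraints over [n], and let U ⊆ [n] be the (nonempty) set of variables that are not bound under DC; in particular, for every (X, Y, N_{Y|X}) ∈ DC, if X ∩ U = ∅ then Y ∩ U = ∅. Then for every polymatroid h satisfying all constraints of DC and every c > 0, the set function f given by f(S) = h(S) for S ∩ U = ∅ and f(S) = h(S) + c for S ∩ U ≠ ∅ is again a polymatroid satisfying all constraints of DC, with f([n]) = h([n]) + c. Consequently sup { h([n]) : h a polymatroid with h(Y) − h(X) ≤ log₂ N_{Y|X} for all (X,Y,N_{Y|X}) ∈ DC } = +∞. -/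
import Mathlib


open Finset

/-- A polymatroid on `[n]`: a nonnegative set function with `h ∅ = 0` that is
monotone and submodular. -/
def IsPolymatroid {n : ℕ} (h : Finset (Fin n) → ℝ) : Prop :=
  h ∅ = 0 ∧ (∀ S, 0 ≤ h S) ∧ (∀ X Y, X ⊆ Y → h X ≤ h Y) ∧
    (∀ X Y, h (X ∪ Y) + h (X ∩ Y) ≤ h X + h Y)

/-- **If some variable is not bound, the polymatroid bound is infinite.** Let `U` be
the nonempty set of unbound variables, so that for every constraint `(X, Y, N) ∈ DC`,
`X ∩ U = ∅` implies `Y ∩ U = ∅`. Then for every polymatroid `h` satisfying the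
constraints and every `c > 0`, the function `f` with `f S = h S` for `S ∩ U = ∅` and
`f S = h S + c` otherwise is again a polymatroid satisfying the constraints, with
`f([n]) = h([n]) + c`. Consequently the polymatroid bound is `+∞`. -/
theorem unbounded_when_unbound_variable
    {n : ℕ} (DC : Finset (Finset (Fin n) × Finset (Fin n) × ℕ))
    (hDCvalid : ∀ c ∈ DC, c.1 ⊂ c.2.1 ∧ 1 ≤ c.2.2)
    (U : Finset (Fin n)) (hUne : U.Nonempty)
    (hUclosed : ∀ c ∈ DC, c.1 ∩ U = ∅ → c.2.1 ∩ U = ∅) :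
    (∀ h : Finset (Fin n) → ℝ, IsPolymatroid h →
      (∀ c ∈ DC, h c.2.1 - h c.1 ≤ Real.logb 2 (c.2.2 : ℝ)) →
      ∀ c : ℝ, 0 < c →
        IsPolymatroid (fun S => if S ∩ U = ∅ then h S else h S + c) ∧
        (∀ cc ∈ DC,
          (fun S => if S ∩ U = ∅ then h S else h S + c) cc.2.1 -
            (fun S => if S ∩ U = ∅ then h S else h S + c) cc.1 ≤
              Real.logb 2 (cc.2.2 : ℝ)) ∧
        (fun S => if S ∩ U = ∅ then h S else h S + c) Finset.univ
          = h Finset.univ + c) ∧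
    sSup {x : EReal | ∃ h : Finset (Fin n) → ℝ, IsPolymatroid h ∧
        (∀ c ∈ DC, h c.2.1 - h c.1 ≤ Real.logb 2 (c.2.2 : ℝ)) ∧
        x = (h Finset.univ : ℝ)} = (⊤ : EReal) := by
  have key : ∀ X Y : Finset (Fin n), X ⊆ Y → Y ∩ U = ∅ → X ∩ U = ∅ := fun X Y hXY hY =>
    Finset.subset_empty.mp (hY ▸ Finset.inter_subset_inter hXY (Finset.Subset.refl U))
  have huniv : (Finset.univ : Finset (Fin n)) ∩ U ≠ ∅ := by
    rw [Finset.univ_inter]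
    exact hUne.ne_empty
  have main : ∀ h : Finset (Fin n) → ℝ, IsPolymatroid h →
      (∀ c ∈ DC, h c.2.1 - h c.1 ≤ Real.logb 2 (c.2.2 : ℝ)) →
      ∀ c : ℝ, 0 < c →
        IsPolymatroid (fun S => if S ∩ U = ∅ then h S else h S + c) ∧
        (∀ cc ∈ DC,
          (fun S => if S ∩ U = ∅ then h S else h S + c) cc.2.1 -
            (fun S => if S ∩ U = ∅ then h S else h S + c) cc.1 ≤
              Real.logb 2 (cc.2.2 : ℝ)) ∧
        (fun S => if S ∩ U = ∅ then h S else h S + c) Finset.univ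
          = h Finset.univ + c := by
    intro h hpoly hcons c hc
    obtain ⟨h0, hnn, hmono, hsub⟩ := hpoly
    refine ⟨⟨?_, ?_, ?_, ?_⟩, ?_, ?_⟩
    · simp [h0]
    · intro S
      dsimp only
      split_ifs with hs
      · exact hnn S
      · linarith [hnn S]
    · intro X Y hXY
      have hm := hmono X Y hXY
      dsimp only
      split_ifs with h1 h2 h2
      · exact hm
      · linarith
      · exact absurd (key X Y hXY h2) h1
      · linarith
    · intro X Y
      have hb := hsub X Y
      dsimp only
      have hiX : X ∩ U = ∅ → X ∩ Y ∩ U = ∅ := key _ _ Finset.inter_subset_left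
      have hiY : Y ∩ U = ∅ → X ∩ Y ∩ U = ∅ := key _ _ Finset.inter_subset_right
      have huX : (X ∪ Y) ∩ U = ∅ → X ∩ U = ∅ := key _ _ Finset.subset_union_left
      have huY : (X ∪ Y) ∩ U = ∅ → Y ∩ U = ∅ := key _ _ Finset.subset_union_right
      have huXY : X ∩ U = ∅ → Y ∩ U = ∅ → (X ∪ Y) ∩ U = ∅ := by
        intro h1 h2
        rw [Finset.union_inter_distrib_right, h1, h2, Finset.union_empty]
      split_ifs with h1 h2 h3 h4 h3 h4 h3 h4 h2 h3 h4 h3 h4 h3 h4 <;>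
        first
          | linarith
          | (exfalso; tauto)
    · intro cc hcc
      dsimp only
      by_cases hX : cc.1 ∩ U = ∅
      · have hY := hUclosed cc hcc hX
        rw [if_pos hX, if_pos hY]
        exact hcons cc hcc
      · have hY : cc.2.1 ∩ U ≠ ∅ := fun hY => hX (key _ _ (hDCvalid cc hcc).1.subset hY)
        rw [if_neg hX, if_neg hY]
        have := hcons cc hcc
        linarith
    · dsimp only
      rw [if_neg huniv]
  refine ⟨main, ?_⟩
  rw [sSup_eq_top]
  intro b hb
  have hz : IsPolymatroid (fun _ : Finset (Fin n) => (0 : ℝ)) :=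
    ⟨rfl, fun _ => le_refl 0, fun _ _ _ => le_refl 0, by norm_num⟩
  have hzc : ∀ c ∈ DC, (fun _ : Finset (Fin n) => (0 : ℝ)) c.2.1 -
      (fun _ : Finset (Fin n) => (0 : ℝ)) c.1 ≤ Real.logb 2 (c.2.2 : ℝ) := by
    intro c hc
    have : (1 : ℝ) ≤ (c.2.2 : ℝ) := by exact_mod_cast (hDCvalid c hc).2
    simpa using Real.logb_nonneg one_lt_two this
  set c : ℝ := max 0 b.toReal + 1 with hcdef
  have hcpos : 0 < c := by positivity
  obtain ⟨hfp, hfc, hfu⟩ := main _ hz hzc c hcpos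
  refine ⟨((c : ℝ) : EReal), ⟨fun S => if S ∩ U = ∅ then 0 else 0 + c, hfp, hfc, ?_⟩, ?_⟩
  · rw [hfu]; norm_num
  · induction b with
    | bot => exact EReal.bot_lt_coe c
    | coe x =>
        rw [EReal.coe_lt_coe_iff]
        have : x ≤ max 0 (EReal.toReal x) := by
          simp
        simp only [hcdef]
        linarith
    | top => exact absurd hb (lt_irrefl ⊤)
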